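/- Let f : C → D and g : D → C be chain maps of R-module chain complexes. Then the induced maps f_* : T(gf) → T(fg) and g_* : T(fg) → T(gf) between algebraic mapping tori are quasi-isomorphisms. -/

import Mathlib

open CategoryTheory LaurentPolynomial

/-- Degreewise scalar multiplication by `a` as a chain self-map. -/
def smulChainMap {A : Type*} [CommRing A] {ι : Type*} {c : ComplexShape ι} (a : A)
    (K : HomologicalComplex (ModuleCat A) c) : K ⟶ K where
  f n := ModuleCat.ofHom (a • LinearMap.id)
  comm' := by
    intro i j _
    ext x
    show (K.d i j) (a • x) = a • (K.d i j) x
    exact (K.d i j).hom.map_smul a x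

open CategoryTheory.Limits CochainComplex HomComplex

set_option linter.unusedSectionVars false

namespace Mather

lemma smulChainMap_comm {A : Type*} [CommRing A] {ι : Type*} {c : ComplexShape ι} (a : A)
    {K L : HomologicalComplex (ModuleCat A) c} (φ : K ⟶ L) :
    smulChainMap a K ≫ φ = φ ≫ smulChainMap a L := by
  ext n x
  show (φ.f n) (a • x) = a • (φ.f n) x
  exact (φ.f n).hom.map_smul a x

lemma smulChainMap_comp {A : Type*} [CommRing A] {ι : Type*} {c : ComplexShape ι} (a b : A)
    (K : HomologicalComplex (ModuleCat A) c) :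
    smulChainMap a K ≫ smulChainMap b K = smulChainMap (a * b) K := by
  ext n x
  show b • a • x = (a * b) • x
  rw [smul_smul, mul_comm]

lemma smulChainMap_one {A : Type*} [CommRing A] {ι : Type*} {c : ComplexShape ι}
    (K : HomologicalComplex (ModuleCat A) c) :
    smulChainMap (1 : A) K = 𝟙 K := by
  ext n x
  show (1 : A) • x = x
  simp

instance isIso_smulChainMap_T {R : Type*} [CommRing R] {ι : Type*} {c : ComplexShape ι}
    (K : HomologicalComplex (ModuleCat (LaurentPolynomial R)) c) :
    IsIso (smulChainMap (T (R := R) 1) K) := by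
  refine ⟨smulChainMap (T (-1)) K, ?_, ?_⟩ <;>
    rw [smulChainMap_comp, ← T_add] <;> norm_num <;> exact smulChainMap_one K

namespace MC

variable {C : Type*} [Category C] [Preadditive C] [HasZeroObject C] [HasBinaryBiproducts C]
variable {K₁ L₁ K₂ L₂ : CochainComplex C ℤ} (φ₁ : K₁ ⟶ L₁) (φ₂ : K₂ ⟶ L₂)

open CochainComplex.mappingCone

lemma map_congr {a a' : K₁ ⟶ K₂} {b b' : L₁ ⟶ L₂} (comm : φ₁ ≫ b = a ≫ φ₂)
    (ha : a = a') (hb : b = b') :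
    map φ₁ φ₂ a b comm = map φ₁ φ₂ a' b' (by rw [← ha, ← hb]; exact comm) := by
  subst ha hb; rfl

lemma map_add (a a' : K₁ ⟶ K₂) (b b' : L₁ ⟶ L₂) (comm : φ₁ ≫ b = a ≫ φ₂)
    (comm' : φ₁ ≫ b' = a' ≫ φ₂) :
    map φ₁ φ₂ (a + a') (b + b') (by rw [Preadditive.comp_add, Preadditive.add_comp, comm, comm']) =
      map φ₁ φ₂ a b comm + map φ₁ φ₂ a' b' comm' := by
  ext n
  simp [ext_from_iff _ (n+1) n rfl, mappingCone.map]

noncomputable def homotopyMapSelf (w : K₁ ⟶ K₁) (comm : w ≫ w = w ≫ w) :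
    Homotopy (map w w w w comm) 0 :=
  (Cochain.equivHomotopy _ _).symm ⟨(snd w).comp (inl w) (zero_add (-1)), by
    ext n
    simp [ext_from_iff _ (n+1) n rfl, ext_to_iff _ n (n+1) rfl, mappingCone.map,
      δ_zero_cochain_comp _ _ _ (neg_add_cancel 1),
      Cochain.comp_v _ _ (add_neg_cancel 1) n (n+1) n rfl (by omega)]⟩

lemma map_isIso (a : K₁ ⟶ K₂) (b : L₁ ⟶ L₂) [IsIso a] [IsIso b] (comm : φ₁ ≫ b = a ≫ φ₂) :
    IsIso (map φ₁ φ₂ a b comm) := by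
  have comm' : φ₂ ≫ inv b = inv a ≫ φ₁ := by
    rw [← cancel_epi a, ← reassoc_of% comm]
    simp
  refine ⟨map φ₂ φ₁ (inv a) (inv b) comm', ?_, ?_⟩
  · rw [← map_comp, map_congr _ _ _ (IsIso.hom_inv_id a) (IsIso.hom_inv_id b), map_id]
  · rw [← map_comp, map_congr _ _ _ (IsIso.inv_hom_id a) (IsIso.inv_hom_id b), map_id]

end MC

lemma isIso_of_comp {C : Type*} [Category C] {X Y : C} (f : X ⟶ Y) (g : Y ⟶ X)
    (h1 : IsIso (f ≫ g)) (h2 : IsIso (g ≫ f)) : IsIso f := by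
  have : Epi f := @epi_of_epi _ _ _ _ _ g f inferInstance
  refine ⟨⟨g ≫ inv (f ≫ g), by rw [← Category.assoc, IsIso.hom_inv_id], ?_⟩⟩
  rw [← cancel_epi f, ← Category.assoc, ← Category.assoc, IsIso.hom_inv_id,
    Category.id_comp, Category.comp_id]

end Mather

namespace Mather.MC

open CochainComplex.mappingCone

variable {C : Type*} [Category C] [Abelian C]

lemma homologyMap_comp_eq {K L : CochainComplex C ℤ}
    (w₁ : K ⟶ K) (w₂ : L ⟶ L) (p : K ⟶ L) (q : L ⟶ K) (t₁ : K ⟶ K)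
    (h₁ : p ≫ q = w₁ + t₁) (ht₁ : w₁ ≫ t₁ = t₁ ≫ w₁)
    (comm₁ : w₁ ≫ p = p ≫ w₂) (comm₂ : w₂ ≫ q = q ≫ w₁) (n : ℤ) :
    HomologicalComplex.homologyMap
        (map w₁ w₂ p p comm₁ ≫ map w₂ w₁ q q comm₂) n =
      HomologicalComplex.homologyMap (map w₁ w₁ t₁ t₁ ht₁) n := by
  rw [← map_comp, map_congr _ _ _ h₁ h₁, map_add _ _ w₁ t₁ w₁ t₁ rfl ht₁]
  have h := (homotopyMapSelf w₁ rfl).add (Homotopy.refl (map w₁ w₁ t₁ t₁ ht₁))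
  rw [h.homologyMap_eq, zero_add]

lemma quasiIso_mapTorus {K L : CochainComplex C ℤ}
    (w₁ : K ⟶ K) (w₂ : L ⟶ L) (p : K ⟶ L) (q : L ⟶ K) (t₁ t₂ : _)
    [IsIso t₁] [IsIso t₂]
    (h₁ : p ≫ q = w₁ + t₁) (h₂ : q ≫ p = w₂ + t₂)
    (ht₁ : w₁ ≫ t₁ = t₁ ≫ w₁) (ht₂ : w₂ ≫ t₂ = t₂ ≫ w₂)
    (comm₁ : w₁ ≫ p = p ≫ w₂) (comm₂ : w₂ ≫ q = q ≫ w₁) :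
    QuasiIso (map w₁ w₂ p p comm₁) := by
  rw [quasiIso_iff]
  intro n
  rw [quasiIsoAt_iff_isIso_homologyMap]
  have i₁ : IsIso (map w₁ w₁ t₁ t₁ ht₁) := map_isIso _ _ _ _ ht₁
  have i₂ : IsIso (map w₂ w₂ t₂ t₂ ht₂) := map_isIso _ _ _ _ ht₂
  have e₁ := homologyMap_comp_eq w₁ w₂ p q t₁ h₁ ht₁ comm₁ comm₂ n
  have e₂ := homologyMap_comp_eq w₂ w₁ q p t₂ h₂ ht₂ comm₂ comm₁ n
  rw [HomologicalComplex.homologyMap_comp] at e₁ e₂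
  refine isIso_of_comp _ (HomologicalComplex.homologyMap (map w₂ w₁ q q comm₂) n) ?_ ?_
  · rw [e₁]; infer_instance
  · rw [e₂]; infer_instance

end Mather.MC

/-- Mather's mapping torus trick: For chain maps `f : C → D` and
`g : D → C` of `R`-module chain complexes, the induced maps
`f_* : T(gf) → T(fg)` and `g_* : T(fg) → T(gf)` of algebraic mapping tori are
quasi-isomorphisms. -/
theorem stmt7 (R : Type*) [CommRing R] (C D : CochainComplex (ModuleCat R) ℤ)
    (f : C ⟶ D) (g : D ⟶ C) :
    ∀ (w₁ : ((ModuleCat.extendScalars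
            (algebraMap R (LaurentPolynomial R))).mapHomologicalComplex
              (ComplexShape.up ℤ)).obj C ⟶
          ((ModuleCat.extendScalars
            (algebraMap R (LaurentPolynomial R))).mapHomologicalComplex
              (ComplexShape.up ℤ)).obj C)
      (w₂ : ((ModuleCat.extendScalars
            (algebraMap R (LaurentPolynomial R))).mapHomologicalComplex
              (ComplexShape.up ℤ)).obj D ⟶
          ((ModuleCat.extendScalars
            (algebraMap R (LaurentPolynomial R))).mapHomologicalComplex
              (ComplexShape.up ℤ)).obj D),
      -- `w₁` defines the torus `T(gf)` of `g ∘ f : C ⟶ C`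
      w₁ = ((ModuleCat.extendScalars
            (algebraMap R (LaurentPolynomial R))).mapHomologicalComplex
              (ComplexShape.up ℤ)).map (f ≫ g) - smulChainMap (T 1) _ →
      -- `w₂` defines the torus `T(fg)` of `f ∘ g : D ⟶ D`
      w₂ = ((ModuleCat.extendScalars
            (algebraMap R (LaurentPolynomial R))).mapHomologicalComplex
              (ComplexShape.up ℤ)).map (g ≫ f) - smulChainMap (T 1) _ →
      (∀ comm₁ : w₁ ≫ ((ModuleCat.extendScalars
            (algebraMap R (LaurentPolynomial R))).mapHomologicalComplex
              (ComplexShape.up ℤ)).map f =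
          ((ModuleCat.extendScalars
            (algebraMap R (LaurentPolynomial R))).mapHomologicalComplex
              (ComplexShape.up ℤ)).map f ≫ w₂,
        QuasiIso (CochainComplex.mappingCone.map w₁ w₂
          (((ModuleCat.extendScalars
            (algebraMap R (LaurentPolynomial R))).mapHomologicalComplex
              (ComplexShape.up ℤ)).map f)
          (((ModuleCat.extendScalars
            (algebraMap R (LaurentPolynomial R))).mapHomologicalComplex
              (ComplexShape.up ℤ)).map f) comm₁)) ∧
      (∀ comm₂ : w₂ ≫ ((ModuleCat.extendScalars
            (algebraMap R (LaurentPolynomial R))).mapHomologicalComplex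
              (ComplexShape.up ℤ)).map g =
          ((ModuleCat.extendScalars
            (algebraMap R (LaurentPolynomial R))).mapHomologicalComplex
              (ComplexShape.up ℤ)).map g ≫ w₁,
        QuasiIso (CochainComplex.mappingCone.map w₂ w₁
          (((ModuleCat.extendScalars
            (algebraMap R (LaurentPolynomial R))).mapHomologicalComplex
              (ComplexShape.up ℤ)).map g)
          (((ModuleCat.extendScalars
            (algebraMap R (LaurentPolynomial R))).mapHomologicalComplex
              (ComplexShape.up ℤ)).map g) comm₂)) := by
  intro w₁ w₂ h₁ h₂
  subst h₁ h₂
  set F := (ModuleCat.extendScalars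
      (algebraMap R (LaurentPolynomial R))).mapHomologicalComplex (ComplexShape.up ℤ) with hFdef
  set t₁ := smulChainMap (T (R := R) 1) (F.obj C) with ht₁def
  set t₂ := smulChainMap (T (R := R) 1) (F.obj D) with ht₂def
  set w₁ := F.map (f ≫ g) - t₁ with hw₁
  set w₂ := F.map (g ≫ f) - t₂ with hw₂
  have e₁ : F.map f ≫ F.map g = w₁ + t₁ := by
    rw [hw₁, ← Functor.map_comp]; abel
  have e₂ : F.map g ≫ F.map f = w₂ + t₂ := by
    rw [hw₂, ← Functor.map_comp]; abel
  have ct₁ : w₁ ≫ t₁ = t₁ ≫ w₁ := (Mather.smulChainMap_comm _ w₁).symm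
  have ct₂ : w₂ ≫ t₂ = t₂ ≫ w₂ := (Mather.smulChainMap_comm _ w₂).symm
  have comm₂ : w₂ ≫ F.map g = F.map g ≫ w₁ := by
    rw [hw₁, hw₂]
    simp only [Functor.map_comp, Preadditive.sub_comp, Preadditive.comp_sub, Category.assoc]
    rw [Mather.smulChainMap_comm]
  have comm₁' : w₁ ≫ F.map f = F.map f ≫ w₂ := by
    rw [hw₁, hw₂]
    simp only [Functor.map_comp, Preadditive.sub_comp, Preadditive.comp_sub, Category.assoc]
    rw [Mather.smulChainMap_comm]
  constructor
  · intro comm₁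
    exact Mather.MC.quasiIso_mapTorus w₁ w₂ (F.map f) (F.map g) t₁ t₂ e₁ e₂ ct₁ ct₂ comm₁ comm₂
  · intro comm₂'
    exact Mather.MC.quasiIso_mapTorus w₂ w₁ (F.map g) (F.map f) t₂ t₁ e₂ e₁ ct₂ ct₁ comm₂' comm₁'
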